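/- (Linear network, uniqueness of the equilibrium fixed point.) Let J ≥ 1, let α_1, …, α_{J+1} > 0, and for 1 ≤ j ≤ J+1 let β_j: [0,∞) → (0,∞) be continuous and nondecreasing. Then the system of equations u_j = α_j/√(β_j(u_j)) + α_{J+1}/√(β_{J+1}(u_1 + ⋯ + u_J)), for 1 ≤ j ≤ J, has exactly one solution (u_1, …, u_J) ∈ [0,∞)^J, and each u_j is strictly positive. -/

import Mathlib

open Real Filter Set Function

noncomputable def fA (a : ℝ) (b : ℝ → ℝ) (u : ℝ) : ℝ := a / Real.sqrt (b (max u 0))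

noncomputable def HA (a : ℝ) (b : ℝ → ℝ) (u : ℝ) : ℝ := u - fA a b u

variable {a : ℝ} {b : ℝ → ℝ}

lemma fA_pos (ha : 0 < a) (hb : ∀ x, 0 ≤ x → 0 < b x) (u : ℝ) : 0 < fA a b u :=
  div_pos ha (Real.sqrt_pos.2 (hb _ (le_max_right _ _)))

lemma fA_anti (ha : 0 < a) (hb : ∀ x, 0 ≤ x → 0 < b x) (hmono : MonotoneOn b (Set.Ici 0))
    {u v : ℝ} (huv : u ≤ v) : fA a b v ≤ fA a b u := by
  have h1 : (0:ℝ) ≤ max u 0 := le_max_right _ _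
  have h2 : (0:ℝ) ≤ max v 0 := le_max_right _ _
  have hble : b (max u 0) ≤ b (max v 0) := hmono h1 h2 (max_le_max huv le_rfl)
  unfold fA
  gcongr
  exact Real.sqrt_pos.2 (hb _ h1)

lemma fA_le_zero (ha : 0 < a) (hb : ∀ x, 0 ≤ x → 0 < b x) (hmono : MonotoneOn b (Set.Ici 0))
    (u : ℝ) : fA a b u ≤ fA a b 0 := by
  rcases le_total u 0 with h | h
  · have : max u 0 = max 0 0 := by simp [max_eq_right h]
    simp [fA, this]
  · exact fA_anti ha hb hmono h

lemma fA_cont (hb : ∀ x, 0 ≤ x → 0 < b x) (hcont : ContinuousOn b (Set.Ici 0)) :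
    Continuous (fA a b) := by
  have hm : Continuous fun u : ℝ => max u 0 := continuous_id.max continuous_const
  have hbm : Continuous fun u : ℝ => b (max u 0) :=
    hcont.comp_continuous hm fun x => Set.mem_Ici.2 (le_max_right _ _)
  exact continuous_const.div (Real.continuous_sqrt.comp hbm)
    fun u => (Real.sqrt_pos.2 (hb _ (le_max_right _ _))).ne'

lemma HA_strictMono (ha : 0 < a) (hb : ∀ x, 0 ≤ x → 0 < b x)
    (hmono : MonotoneOn b (Set.Ici 0)) : StrictMono (HA a b) := fun u v h => by
  have := fA_anti ha hb hmono h.le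
  unfold HA; linarith

lemma HA_cont (hb : ∀ x, 0 ≤ x → 0 < b x) (hcont : ContinuousOn b (Set.Ici 0)) :
    Continuous (HA a b) := continuous_id.sub (fA_cont hb hcont)

lemma HA_surj (ha : 0 < a) (hb : ∀ x, 0 ≤ x → 0 < b x)
    (hcont : ContinuousOn b (Set.Ici 0)) (hmono : MonotoneOn b (Set.Ici 0)) :
    Function.Surjective (HA a b) := by
  have htop : Tendsto (HA a b) atTop atTop := by
    apply tendsto_atTop_mono (f := fun u => u - fA a b 0)
    · intro u
      have := fA_le_zero ha hb hmono u
      unfold HA; linarith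
    · exact tendsto_atTop_add_const_right _ _ tendsto_id
  have hbot : Tendsto (HA a b) atBot atBot := by
    apply tendsto_atBot_mono (f := fun u : ℝ => u)
    · intro u
      have := fA_pos ha hb u
      unfold HA; linarith
    · exact tendsto_id
  exact (HA_cont hb hcont).surjective htop hbot

noncomputable def phiA (a : ℝ) (b : ℝ → ℝ) : ℝ → ℝ := Function.invFun (HA a b)

lemma phiA_spec (ha : 0 < a) (hb : ∀ x, 0 ≤ x → 0 < b x)
    (hcont : ContinuousOn b (Set.Ici 0)) (hmono : MonotoneOn b (Set.Ici 0)) (c : ℝ) :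
    HA a b (phiA a b c) = c :=
  Function.rightInverse_invFun (HA_surj ha hb hcont hmono) c

lemma phiA_eq (ha : 0 < a) (hb : ∀ x, 0 ≤ x → 0 < b x)
    (hcont : ContinuousOn b (Set.Ici 0)) (hmono : MonotoneOn b (Set.Ici 0)) (c : ℝ) :
    phiA a b c = fA a b (phiA a b c) + c := by
  have := phiA_spec ha hb hcont hmono c
  unfold HA at this; linarith

lemma phiA_mono (ha : 0 < a) (hb : ∀ x, 0 ≤ x → 0 < b x)
    (hcont : ContinuousOn b (Set.Ici 0)) (hmono : MonotoneOn b (Set.Ici 0)) :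
    Monotone (phiA a b) := by
  intro c d hcd
  have h := (HA_strictMono ha hb hmono).le_iff_le (a := phiA a b c) (b := phiA a b d)
  rw [phiA_spec ha hb hcont hmono, phiA_spec ha hb hcont hmono] at h
  exact h.1 hcd

lemma phiA_cont (ha : 0 < a) (hb : ∀ x, 0 ≤ x → 0 < b x)
    (hcont : ContinuousOn b (Set.Ici 0)) (hmono : MonotoneOn b (Set.Ici 0)) :
    Continuous (phiA a b) := by
  set e : ℝ ≃o ℝ := StrictMono.orderIsoOfSurjective (HA a b) (HA_strictMono ha hb hmono)
    (HA_surj ha hb hcont hmono) with he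
  have hfun : phiA a b = ⇑e.symm := by
    funext c
    apply (HA_strictMono ha hb hmono).injective
    rw [phiA_spec ha hb hcont hmono]
    have : HA a b (e.symm c) = e (e.symm c) := rfl
    rw [this, e.apply_symm_apply]
  rw [hfun]
  exact (e.symm : ℝ ≃o ℝ).continuous

lemma master (J : ℕ) (hJ : 1 ≤ J) (a : Fin J → ℝ) (aL : ℝ) (b : Fin J → ℝ → ℝ) (bL : ℝ → ℝ)
    (ha : ∀ j, 0 < a j) (haL : 0 < aL)
    (hb : ∀ j x, 0 ≤ x → 0 < b j x) (hbL : ∀ x, 0 ≤ x → 0 < bL x)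
    (hbc : ∀ j, ContinuousOn (b j) (Set.Ici 0)) (hbLc : ContinuousOn bL (Set.Ici 0))
    (hbm : ∀ j, MonotoneOn (b j) (Set.Ici 0)) (hbLm : MonotoneOn bL (Set.Ici 0)) :
    ∃! u : Fin J → ℝ, (∀ j, 0 ≤ u j) ∧
      ∀ j : Fin J, u j = a j / Real.sqrt (b j (u j)) + aL / Real.sqrt (bL (∑ i, u i)) := by
  haveI : Nonempty (Fin J) := ⟨⟨0, hJ⟩⟩
  set C : ℝ → ℝ := fA aL bL with hC
  set φ : Fin J → ℝ → ℝ := fun j => phiA (a j) (b j) with hφ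
  have hCpos : ∀ s, 0 < C s := fun s => fA_pos haL hbL s
  have hφeq : ∀ j c, φ j c = fA (a j) (b j) (φ j c) + c :=
    fun j c => phiA_eq (ha j) (hb j) (hbc j) (hbm j) c
  have hφ_gt : ∀ j c, c < φ j c := by
    intro j c
    have h1 := hφeq j c
    have h2 := fA_pos (ha j) (hb j) (φ j c)
    linarith
  have hφ_le : ∀ j c, φ j c ≤ fA (a j) (b j) 0 + c := by
    intro j c
    have h1 := hφeq j c
    have h2 := fA_le_zero (ha j) (hb j) (hbm j) (φ j c)
    linarith
  -- any solution has the canonical form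
  have key : ∀ u : Fin J → ℝ, (∀ j, 0 ≤ u j) →
      (∀ j, u j = a j / Real.sqrt (b j (u j)) + aL / Real.sqrt (bL (∑ i, u i))) →
      ∀ j, u j = φ j (C (∑ i, u i)) := by
    intro u hu hequ j
    have hsum : (0:ℝ) ≤ ∑ i, u i := Finset.sum_nonneg fun i _ => hu i
    have h1 : HA (a j) (b j) (u j) = C (∑ i, u i) := by
      have e1 : fA (a j) (b j) (u j) = a j / Real.sqrt (b j (u j)) := by
        unfold fA; rw [max_eq_left (hu j)]
      have e2 : C (∑ i, u i) = aL / Real.sqrt (bL (∑ i, u i)) := by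
        rw [hC]; unfold fA; rw [max_eq_left hsum]
      have := hequ j
      rw [HA, e1, e2]; linarith
    apply (HA_strictMono (ha j) (hb j) (hbm j)).injective
    rw [h1, phiA_spec (ha j) (hb j) (hbc j) (hbm j)]
  -- comparison of two solutions
  have mono_le : ∀ u v : Fin J → ℝ, (∀ j, 0 ≤ u j) →
      (∀ j, u j = a j / Real.sqrt (b j (u j)) + aL / Real.sqrt (bL (∑ i, u i))) →
      (∀ j, 0 ≤ v j) →
      (∀ j, v j = a j / Real.sqrt (b j (v j)) + aL / Real.sqrt (bL (∑ i, v i))) →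
      (∑ i, u i) ≤ (∑ i, v i) → ∀ j, v j ≤ u j := by
    intro u v hu hequ hv heqv hle j
    have hupos : (0:ℝ) ≤ ∑ i, u i := Finset.sum_nonneg fun i _ => hu i
    have hCle : C (∑ i, v i) ≤ C (∑ i, u i) := fA_anti haL hbL hbLm hle
    rw [key u hu hequ j, key v hv heqv j]
    exact phiA_mono (ha j) (hb j) (hbc j) (hbm j) hCle
  have uniq : ∀ u v : Fin J → ℝ, (∀ j, 0 ≤ u j) →
      (∀ j, u j = a j / Real.sqrt (b j (u j)) + aL / Real.sqrt (bL (∑ i, u i))) →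
      (∀ j, 0 ≤ v j) →
      (∀ j, v j = a j / Real.sqrt (b j (v j)) + aL / Real.sqrt (bL (∑ i, v i))) →
      u = v := by
    intro u v hu hequ hv heqv
    have hsums : (∑ i, u i) = (∑ i, v i) := by
      rcases le_total (∑ i, u i) (∑ i, v i) with h | h
      · have h2 := mono_le u v hu hequ hv heqv h
        have : (∑ i, v i) ≤ (∑ i, u i) := Finset.sum_le_sum fun i _ => h2 i
        linarith
      · have h2 := mono_le v u hv heqv hu hequ h
        have : (∑ i, u i) ≤ (∑ i, v i) := Finset.sum_le_sum fun i _ => h2 i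
        linarith
    funext j
    rw [key u hu hequ j, key v hv heqv j, hsums]
  -- existence: find the fixed total s
  set G : ℝ → ℝ := fun s => ∑ j, φ j (C s) with hG
  have hGcont : Continuous G := by
    apply continuous_finset_sum
    intro j _
    exact (phiA_cont (ha j) (hb j) (hbc j) (hbm j)).comp (fA_cont hbL hbLc)
  set B : ℝ := ∑ j, (fA (a j) (b j) 0 + C 0) with hB
  have hGleB : ∀ s, G s ≤ B := by
    intro s
    apply Finset.sum_le_sum
    intro j _
    have h1 := hφ_le j (C s)
    have h2 : C s ≤ C 0 := fA_le_zero haL hbL hbLm s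
    linarith
  have hB0 : (0:ℝ) ≤ B := by
    apply Finset.sum_nonneg
    intro j _
    have := fA_pos (ha j) (hb j) (0:ℝ)
    have := hCpos 0
    linarith
  have hG0 : 0 < G 0 := by
    apply Finset.sum_pos
    · intro j _
      exact (hCpos 0).trans (hφ_gt j (C 0))
    · exact Finset.univ_nonempty
  obtain ⟨s, hsmem, hKs⟩ := intermediate_value_Icc hB0
    ((continuous_id.sub hGcont).continuousOn (s := Set.Icc 0 B))
    (by constructor <;> simp only [id_eq] <;> [linarith [hG0]; linarith [hGleB B]] :
      (0:ℝ) ∈ Set.Icc ((fun s => s - G s) 0) ((fun s => s - G s) B))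
  have hs0 : (0:ℝ) ≤ s := hsmem.1
  have hGs : G s = s := by
    change s - G s = 0 at hKs; linarith
  refine ⟨fun j => φ j (C s), ⟨?_, ?_⟩, ?_⟩
  · intro j
    exact ((hCpos s).trans (hφ_gt j (C s))).le
  · intro j
    have hsum : (∑ i, φ i (C s)) = s := hGs
    have hj0 : (0:ℝ) ≤ φ j (C s) := ((hCpos s).trans (hφ_gt j (C s))).le
    have e1 : fA (a j) (b j) (φ j (C s)) = a j / Real.sqrt (b j (φ j (C s))) := by
      unfold fA; rw [max_eq_left hj0]
    have e2 : C s = aL / Real.sqrt (bL s) := by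
      rw [hC]; unfold fA; rw [max_eq_left hs0]
    rw [hsum, ← e1, ← e2]
    exact hφeq j (C s)
  · intro v ⟨hv0, hveq⟩
    apply uniq v _ hv0 hveq
    · intro j
      exact ((hCpos s).trans (hφ_gt j (C s))).le
    · intro j
      have hsum : (∑ i, φ i (C s)) = s := hGs
      have hj0 : (0:ℝ) ≤ φ j (C s) := ((hCpos s).trans (hφ_gt j (C s))).le
      have e1 : fA (a j) (b j) (φ j (C s)) = a j / Real.sqrt (b j (φ j (C s))) := by
        unfold fA; rw [max_eq_left hj0]
      have e2 : C s = aL / Real.sqrt (bL s) := by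
        rw [hC]; unfold fA; rw [max_eq_left hs0]
      rw [hsum, ← e1, ← e2]
      exact hφeq j (C s)

theorem stmt9 (J : ℕ) (hJ : 1 ≤ J) (α : Fin (J + 1) → ℝ) (β : Fin (J + 1) → ℝ → ℝ)
    (hα : ∀ j, 0 < α j)
    (hβpos : ∀ j x, 0 ≤ x → 0 < β j x)
    (hβcont : ∀ j, ContinuousOn (β j) (Set.Ici 0))
    (hβmono : ∀ j, MonotoneOn (β j) (Set.Ici 0)) :
    (∃! u : Fin J → ℝ, (∀ j, 0 ≤ u j) ∧
      ∀ j : Fin J, u j = α j.castSucc / Real.sqrt (β j.castSucc (u j)) +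
        α (Fin.last J) / Real.sqrt (β (Fin.last J) (∑ i, u i))) ∧
    ∀ u : Fin J → ℝ, (∀ j, 0 ≤ u j) →
      (∀ j : Fin J, u j = α j.castSucc / Real.sqrt (β j.castSucc (u j)) +
        α (Fin.last J) / Real.sqrt (β (Fin.last J) (∑ i, u i))) →
      ∀ j, 0 < u j := by
  constructor
  · exact master J hJ (fun j => α j.castSucc) (α (Fin.last J)) (fun j => β j.castSucc)
      (β (Fin.last J)) (fun j => hα _) (hα _) (fun j => hβpos _) (hβpos _)
      (fun j => hβcont _) (hβcont _) (fun j => hβmono _) (hβmono _)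
  · intro u hu hequ j
    have hsum : (0:ℝ) ≤ ∑ i, u i := Finset.sum_nonneg fun i _ => hu i
    have t1 : 0 < α j.castSucc / Real.sqrt (β j.castSucc (u j)) :=
      div_pos (hα _) (Real.sqrt_pos.2 (hβpos _ _ (hu j)))
    have t2 : 0 < α (Fin.last J) / Real.sqrt (β (Fin.last J) (∑ i, u i)) :=
      div_pos (hα _) (Real.sqrt_pos.2 (hβpos _ _ hsum))
    rw [hequ j]
    linarith
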